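/- Let μ, ν > 0 and let γ be a random variable with density f(γ) = (2^{μ}/B(μ,ν)) γ^{μ-1}(1-γ)^{ν-1}/(1+γ)^{μ+ν} on (0,1). Then the random variable π = (1-γ)/(1+γ) has the Beta(ν, μ) distribution, i.e., π has density π^{ν-1}(1-π)^{μ-1}/B(ν,μ) on (0,1). -/

import Mathlib

open MeasureTheory

/-- The Beta function `B(a,b) = Γ(a)Γ(b)/Γ(a+b)`. -/
noncomputable def betaFn (a b : ℝ) : ℝ := Real.Gamma a * Real.Gamma b / Real.Gamma (a + b)


lemma betaFn_pos {a b : ℝ} (ha : 0 < a) (hb : 0 < b) : 0 < betaFn a b := by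
  unfold betaFn
  exact div_pos (mul_pos (Real.Gamma_pos_of_pos ha) (Real.Gamma_pos_of_pos hb))
    (Real.Gamma_pos_of_pos (by linarith))

lemma betaFn_comm (a b : ℝ) : betaFn a b = betaFn b a := by
  unfold betaFn; rw [mul_comm, add_comm]

lemma key_algebra (m n : ℝ) (hm : 0 < m) (hn : 0 < n) {p : ℝ} (hp0 : 0 < p) (hp1 : p < 1) :
    |(-2) / (1 + p) ^ 2| *
      ((2:ℝ) ^ m / betaFn m n * ((1 - p) / (1 + p)) ^ (m - 1) *
        (2 * p / (1 + p)) ^ (n - 1) / (2 / (1 + p)) ^ (m + n))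
    = p ^ (n - 1) * (1 - p) ^ (m - 1) / betaFn n m := by
  have ha : (0:ℝ) < 1 + p := by linarith
  have hq : (0:ℝ) < 1 - p := by linarith
  have hB : (0:ℝ) < betaFn m n := betaFn_pos hm hn
  rw [betaFn_comm n m]
  rw [abs_div, abs_neg, abs_two, abs_of_pos (by positivity : (0:ℝ) < (1+p)^2)]
  rw [Real.div_rpow hq.le ha.le, Real.div_rpow (by positivity) ha.le,
    Real.div_rpow (by norm_num) ha.le, Real.mul_rpow (by norm_num) hp0.le]
  have e2 : (2:ℝ) ^ (m + n) = 2 * 2 ^ m * 2 ^ (n - 1) := by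
    rw [show m + n = 1 + m + (n - 1) by ring, Real.rpow_add (by norm_num),
      Real.rpow_add (by norm_num), Real.rpow_one]
  have ea : (1 + p) ^ (m + n) = (1 + p) ^ (2:ℕ) * (1 + p) ^ (m - 1) * (1 + p) ^ (n - 1) := by
    rw [← Real.rpow_natCast (1 + p) 2, ← Real.rpow_add ha, ← Real.rpow_add ha]
    norm_num
    congr 1
    ring
  rw [e2, ea]
  have h1 : (1 + p) ^ (m - 1) ≠ 0 := (Real.rpow_pos_of_pos ha _).ne'
  have h2 : (1 + p) ^ (n - 1) ≠ 0 := (Real.rpow_pos_of_pos ha _).ne'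
  have h3 : (2:ℝ) ^ m ≠ 0 := (Real.rpow_pos_of_pos (by norm_num) _).ne'
  have h4 : (2:ℝ) ^ (n - 1) ≠ 0 := (Real.rpow_pos_of_pos (by norm_num) _).ne'
  field_simp

-- properties of φ(x) = (1-x)/(1+x)
lemma phi_mem {x : ℝ} (hx : x ∈ Set.Ioo (0:ℝ) 1) :
    (1 - x) / (1 + x) ∈ Set.Ioo (0:ℝ) 1 := by
  obtain ⟨h0, h1⟩ := hx
  have ha : (0:ℝ) < 1 + x := by linarith
  constructor
  · exact div_pos (by linarith) ha
  · rw [div_lt_one ha]; linarith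

lemma phi_invol {x : ℝ} (hx : x ∈ Set.Ioo (0:ℝ) 1) :
    (1 - (1 - x) / (1 + x)) / (1 + (1 - x) / (1 + x)) = x := by
  have ha : (1:ℝ) + x ≠ 0 := by have := hx.1; intro h; linarith [hx.1]
  field_simp
  ring

lemma lintegral_cov {s : Set ℝ} (hs : MeasurableSet s) {f f' : ℝ → ℝ}
    (hf' : ∀ x ∈ s, HasDerivWithinAt f (f' x) s x) (hf : Set.InjOn f s) (g : ℝ → ENNReal) :
    ∫⁻ x in f '' s, g x = ∫⁻ x in s, ENNReal.ofReal |f' x| * g (f x) := by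
  simpa only [ContinuousLinearMap.det_toSpanSingleton] using
    lintegral_image_eq_lintegral_abs_det_fderiv_mul volume hs
      (fun x hx => (hf' x hx).hasFDerivWithinAt) hf g

/-- If `γ` has density `(2^μ/B(μ,ν)) γ^{μ-1}(1-γ)^{ν-1}/(1+γ)^{μ+ν}` on `(0,1)`,
then `(1-γ)/(1+γ)` has the `Beta(ν,μ)` distribution. -/
theorem dallal_gamma_transform_beta
    {Ω : Type*} [MeasurableSpace Ω] (μ : Measure Ω) [IsProbabilityMeasure μ]
    (m n : ℝ) (hm : 0 < m) (hn : 0 < n)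
    (G : Ω → ℝ) (hG : Measurable G)
    (hGlaw : Measure.map G μ =
      volume.withDensity (fun x => ENNReal.ofReal
        (Set.indicator (Set.Ioo (0 : ℝ) 1)
          (fun γ => (2 : ℝ) ^ m / betaFn m n * γ ^ (m - 1) * (1 - γ) ^ (n - 1) /
            (1 + γ) ^ (m + n)) x))) :
    Measure.map (fun ω => (1 - G ω) / (1 + G ω)) μ =
      volume.withDensity (fun x => ENNReal.ofReal
        (Set.indicator (Set.Ioo (0 : ℝ) 1)
          (fun p => p ^ (n - 1) * (1 - p) ^ (m - 1) / betaFn n m) x)) := by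
  set φ : ℝ → ℝ := fun γ => (1 - γ) / (1 + γ) with hφdef
  set f0 : ℝ → ℝ := fun γ => (2 : ℝ) ^ m / betaFn m n * γ ^ (m - 1) * (1 - γ) ^ (n - 1) /
      (1 + γ) ^ (m + n) with hf0def
  set g0 : ℝ → ℝ := fun p => p ^ (n - 1) * (1 - p) ^ (m - 1) / betaFn n m with hg0def
  have hφmeas : Measurable φ :=
    (measurable_const.sub measurable_id).div (measurable_const.add measurable_id)
  have hmap : Measure.map (fun ω => (1 - G ω) / (1 + G ω)) μ
      = Measure.map φ (Measure.map G μ) := by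
    rw [Measure.map_map hφmeas hG]; rfl
  rw [hmap, hGlaw]
  -- indicator/ofReal swap
  have hswap : ∀ (h : ℝ → ℝ) (x : ℝ), ENNReal.ofReal (Set.indicator (Set.Ioo (0:ℝ) 1) h x)
      = Set.indicator (Set.Ioo (0:ℝ) 1) (fun y => ENNReal.ofReal (h y)) x := by
    intro h x
    by_cases hx : x ∈ Set.Ioo (0:ℝ) 1 <;> simp [hx]
  ext s hs
  rw [Measure.map_apply hφmeas hs, withDensity_apply _ (hφmeas hs), withDensity_apply _ hs]
  simp only [hswap]
  rw [setLIntegral_indicator measurableSet_Ioo, setLIntegral_indicator measurableSet_Ioo]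
  -- set identity: Ioo ∩ φ⁻¹ s = φ '' (Ioo ∩ s)
  have hset : Set.Ioo (0:ℝ) 1 ∩ φ ⁻¹' s = φ '' (Set.Ioo (0:ℝ) 1 ∩ s) := by
    ext x
    constructor
    · rintro ⟨hx, hxs⟩
      exact ⟨φ x, ⟨phi_mem hx, hxs⟩, phi_invol hx⟩
    · rintro ⟨y, ⟨hy, hys⟩, rfl⟩
      exact ⟨phi_mem hy, by simpa [hφdef, phi_invol hy] using hys⟩
  rw [hset]
  -- change of variables
  have hderiv : ∀ x ∈ Set.Ioo (0:ℝ) 1 ∩ s,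
      HasDerivWithinAt φ ((-2) / (1 + x) ^ 2) (Set.Ioo (0:ℝ) 1 ∩ s) x := by
    intro x hx
    have ha : (1:ℝ) + x ≠ 0 := by have := hx.1.1; intro h; linarith
    have : HasDerivAt φ ((-1 * (1 + x) - (1 - x) * 1) / (1 + x) ^ 2) x := by
      exact (((hasDerivAt_id x).const_sub 1).div ((hasDerivAt_id x).const_add 1) ha)
    have h2 : (-1 * (1 + x) - (1 - x) * 1) / (1 + x) ^ 2 = (-2) / (1 + x) ^ 2 := by
      ring_nf
    rw [h2] at this
    exact this.hasDerivWithinAt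
  have hinj : Set.InjOn φ (Set.Ioo (0:ℝ) 1 ∩ s) := by
    intro a ha b hb hab
    calc a = φ (φ a) := (phi_invol ha.1).symm
    _ = φ (φ b) := by rw [hab]
    _ = b := phi_invol hb.1
  rw [lintegral_cov (measurableSet_Ioo.inter hs) hderiv hinj]
  refine setLIntegral_congr_fun (measurableSet_Ioo.inter hs) ?_
  rintro x ⟨hx, -⟩
  beta_reduce
  obtain ⟨hx0, hx1⟩ := hx
  have ha : (0:ℝ) < 1 + x := by linarith
  rw [← ENNReal.ofReal_mul (abs_nonneg _)]
  congr 1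
  have e1 : φ x = (1 - x) / (1 + x) := rfl
  have e2 : 1 - φ x = 2 * x / (1 + x) := by
    rw [e1]; field_simp; ring
  have e3 : 1 + φ x = 2 / (1 + x) := by
    rw [e1]; field_simp; ring
  rw [hf0def]
  simp only [e2, e3]
  simp only [e1]
  exact key_algebra m n hm hn hx0 hx1
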